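/- Let K be a field of characteristic p > 0. The map W_{m+1}(K) → Ω^1_K defined by (x_0,…,x_m) ↦ ∑_{i=0}^{m} x_i^{p^{m−i}−1} dx_i (with the convention that a term is 0 when x_i = 0) is a homomorphism of additive groups, where Ω^1_K is the module of absolute Kähler differentials of K. -/

import Mathlib

/-- The map `F^m d : W_{m+1}(K) → Ω¹_K`, `(x_0,…,x_m) ↦ ∑_{i=0}^m x_i^{p^{m−i}−1} dx_i`,
with values in the module of absolute Kähler differentials `Ω¹_K = Ω¹_{K/ℤ}`. -/
noncomputable def FmD (p : ℕ) [Fact p.Prime] (K : Type*) [Field K] (m : ℕ)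
    (w : TruncatedWittVector p (m + 1) K) : KaehlerDifferential ℤ K :=
  ∑ i : Fin (m + 1),
    (w.coeff i) ^ (p ^ (m - i.val) - 1) • (KaehlerDifferential.D ℤ K) (w.coeff i)

open Finset MvPolynomial

section Aux

variable {p : ℕ} [hp : Fact p.Prime]

set_option linter.unusedSectionVars false in
/-- Multiplying the `F^m d`-type sum by `p^m` yields `d` of the evaluated `m`-th
Witt polynomial. -/
lemma FmD_aux_smul (m : ℕ) (A : Type*) [CommRing A] [inst : Algebra ℤ A] (f : ℕ → A) :
    (p ^ m : ℕ) • ∑ i ∈ range (m + 1),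
        f i ^ (p ^ (m - i) - 1) • (KaehlerDifferential.D ℤ A) (f i)
      = (KaehlerDifferential.D ℤ A) (aeval f (wittPolynomial p ℤ m)) := by
  obtain rfl : inst = Ring.toIntAlgebra A := Subsingleton.elim _ _
  rw [aeval_wittPolynomial, map_sum, Finset.smul_sum]
  refine Finset.sum_congr rfl fun i hi => ?_
  rw [Finset.mem_range, Nat.lt_succ_iff] at hi
  have hD : (KaehlerDifferential.D ℤ A) ((p : A) ^ i) = 0 := by
    rw [← Nat.cast_pow, Derivation.map_natCast]
  rw [Derivation.leibniz, hD, smul_zero, add_zero, Derivation.leibniz_pow,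
    ← Nat.cast_pow, Nat.cast_smul_eq_nsmul, smul_smul, ← pow_add,
    Nat.add_sub_cancel' hi]

local notation "R" => MvPolynomial (Fin 2 × ℕ) ℤ

/-- The universal additivity identity over `ℤ`. -/
lemma FmD_univ (m : ℕ) :
    (∑ i ∈ range (m + 1), (WittVector.wittAdd p i) ^ (p ^ (m - i) - 1) •
        (KaehlerDifferential.D ℤ R) (WittVector.wittAdd p i))
      = (∑ i ∈ range (m + 1), (X (0, i) : R) ^ (p ^ (m - i) - 1) •
          (KaehlerDifferential.D ℤ R) (X (0, i)))
        + ∑ i ∈ range (m + 1), (X (1, i) : R) ^ (p ^ (m - i) - 1) •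
            (KaehlerDifferential.D ℤ R) (X (1, i)) := by
  have hpoly : aeval (WittVector.wittAdd p) (wittPolynomial p ℤ m)
      = aeval (fun i => (X (0, i) : R)) (wittPolynomial p ℤ m)
        + aeval (fun i => (X (1, i) : R)) (wittPolynomial p ℤ m) := by
    have h := wittStructureInt_prop p (X 0 + X 1 : MvPolynomial (Fin 2) ℤ) m
    simp only [map_add, bind₁_X_right] at h
    have hb : ∀ b : Fin 2, rename (Prod.mk b) (wittPolynomial p ℤ m)
        = aeval (fun i => (X (b, i) : R)) (wittPolynomial p ℤ m) := by
      intro b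
      rw [← aeval_X_left_apply (rename (Prod.mk b) _), aeval_rename]
      rfl
    rw [← hb 0, ← hb 1]
    rw [show aeval (WittVector.wittAdd p) (wittPolynomial p ℤ m)
        = bind₁ (wittStructureInt p (X 0 + X 1 : MvPolynomial (Fin 2) ℤ)) (wittPolynomial p ℤ m)
      from rfl, h]
  have hne : ((p ^ m : ℕ) : R) ≠ 0 :=
    Nat.cast_ne_zero.mpr (pow_ne_zero m hp.out.ne_zero)
  haveI := (KaehlerDifferential.mvPolynomialBasis ℤ (Fin 2 × ℕ)).isTorsionFree
  apply smul_right_injective (KaehlerDifferential ℤ R) hne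
  show ((p ^ m : ℕ) : R) • _ = ((p ^ m : ℕ) : R) • _
  rw [Nat.cast_smul_eq_nsmul, Nat.cast_smul_eq_nsmul, smul_add,
    FmD_aux_smul, FmD_aux_smul, FmD_aux_smul, ← map_add, hpoly]

end Aux

/-- Let `K` be a field of characteristic `p > 0`.  The map
`W_{m+1}(K) → Ω¹_K`, `(x_0,…,x_m) ↦ ∑_{i=0}^m x_i^{p^{m−i}−1} dx_i`, is a homomorphism
of additive groups (the term for `x_i = 0` vanishes, since `d0 = 0`). -/
theorem stmt6 (p : ℕ) [Fact p.Prime] (K : Type*) [Field K] [CharP K p] (m : ℕ)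
    (a b : TruncatedWittVector p (m + 1) K) :
    FmD p K m (a + b) = FmD p K m a + FmD p K m b := by
  obtain ⟨x, rfl⟩ := WittVector.truncate_surjective p (m + 1) K a
  obtain ⟨y, rfl⟩ := WittVector.truncate_surjective p (m + 1) K b
  rw [← map_add]
  -- rewrite everything as range sums of coefficients of genuine Witt vectors
  have hcoe : ∀ z : WittVector p K, FmD p K m (WittVector.truncate (m + 1) z)
      = ∑ i ∈ Finset.range (m + 1),
          (z.coeff i) ^ (p ^ (m - i) - 1) • (KaehlerDifferential.D ℤ K) (z.coeff i) := by
    intro z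
    rw [FmD, ← Fin.sum_univ_eq_sum_range]
    exact Finset.sum_congr rfl fun i _ => by rw [WittVector.coeff_truncate]
  rw [hcoe, hcoe, hcoe]
  -- set up the specialization algebra structure
  set g : Fin 2 × ℕ → K := Function.uncurry ![x.coeff, y.coeff] with hg
  letI : Algebra (MvPolynomial (Fin 2 × ℕ) ℤ) K := ((aeval g).toRingHom).toAlgebra
  haveI : IsScalarTower ℤ (MvPolynomial (Fin 2 × ℕ) ℤ) K :=
    IsScalarTower.of_algebraMap_eq' (RingHom.ext_int _ _)
  have key := congrArg (KaehlerDifferential.map ℤ ℤ (MvPolynomial (Fin 2 × ℕ) ℤ) K)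
    (FmD_univ (p := p) m)
  have hmap : ∀ f : MvPolynomial (Fin 2 × ℕ) ℤ, ∀ e : ℕ,
      KaehlerDifferential.map ℤ ℤ (MvPolynomial (Fin 2 × ℕ) ℤ) K
        (f ^ e • (KaehlerDifferential.D ℤ _ f))
      = (aeval g f) ^ e • (KaehlerDifferential.D ℤ K (aeval g f)) := by
    intro f e
    rw [LinearMap.map_smul, KaehlerDifferential.map_D, ← algebraMap_smul K (f ^ e),
      RingHom.algebraMap_toAlgebra]
    simp [map_pow]
  simp only [map_add, map_sum, hmap] at key
  have hadd : ∀ i : ℕ, aeval g (WittVector.wittAdd p i) = (x + y).coeff i := by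
    intro i
    rw [WittVector.add_coeff, WittVector.peval]
  have hX : ∀ (b' : Fin 2) (i : ℕ), aeval g (X (b', i) : MvPolynomial (Fin 2 × ℕ) ℤ) = (![x.coeff, y.coeff] b') i := by
    intro b' i
    rw [aeval_X]
    rfl
  simp only [hadd, hX] at key
  simpa [Matrix.cons_val_zero, Matrix.cons_val_one, Matrix.head_cons] using key
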